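/- Let n ≥ 1 be an integer, η ∈ ℝ and μ > 0. Then for every p ∈ (0,1), the function p ↦ β(n,η,μ,p) has derivative at p equal to n·Σ_{k=0}^{n−1} C(n−1,k) p^k (1−p)^{n−1−k} [ Φ(√(n/2)·(η − (k+1)μ/n)) − Φ(√(n/2)·(η − kμ/n)) ], and this derivative is strictly negative. -/

import Mathlib

open MeasureTheory Real

/-- Standard normal density. -/
noncomputable def stdphi (t : ℝ) : ℝ := (Real.sqrt (2 * Real.pi))⁻¹ * Real.exp (-t ^ 2 / 2)

/-- Standard normal CDF. -/
noncomputable def stdPhi (x : ℝ) : ℝ := ∫ t in Set.Iic x, stdphi t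

/-- The type II error function β(n,η,μ,p). -/
noncomputable def betaFn (n : ℕ) (η μ p : ℝ) : ℝ :=
  ∑ k ∈ Finset.range (n + 1), (n.choose k : ℝ) * p ^ k * (1 - p) ^ (n - k) *
    stdPhi (Real.sqrt ((n : ℝ) / 2) * (η - (k : ℝ) * μ / n))

lemma integrable_stdphi : Integrable stdphi := by
  have h : Integrable (fun t : ℝ => Real.exp (-(1/2 : ℝ) * t ^ 2)) :=
    integrable_exp_neg_mul_sq (by norm_num)
  refine (h.const_mul (Real.sqrt (2 * Real.pi))⁻¹).congr ?_
  filter_upwards with t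
  unfold stdphi
  congr 1
  ring

lemma stdphi_pos (t : ℝ) : 0 < stdphi t := by
  have h2 : 0 < Real.sqrt (2 * Real.pi) := Real.sqrt_pos.2 (by positivity)
  unfold stdphi
  positivity

lemma stdPhi_strictMono : StrictMono stdPhi := by
  intro a b hab
  have hint := integrable_stdphi
  have ha : IntegrableOn stdphi (Set.Iic a) volume := hint.integrableOn
  have hb : IntegrableOn stdphi (Set.Iic b) volume := hint.integrableOn
  have hab' : IntervalIntegrable stdphi volume a b := hint.intervalIntegrable
  have h1 : stdPhi b - stdPhi a = ∫ t in a..b, stdphi t :=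
    intervalIntegral.integral_Iic_sub_Iic ha hb
  have h2 : 0 < ∫ t in a..b, stdphi t :=
    intervalIntegral.intervalIntegral_pos_of_pos_on hab' (fun x _ => stdphi_pos x) hab
  linarith

lemma binom_sum_hasDerivAt (n : ℕ) (hn : 1 ≤ n) (a : ℕ → ℝ) (p : ℝ) :
    HasDerivAt (fun q : ℝ => ∑ k ∈ Finset.range (n + 1),
        (n.choose k : ℝ) * q ^ k * (1 - q) ^ (n - k) * a k)
      ((n : ℝ) * ∑ k ∈ Finset.range n,
        ((n - 1).choose k : ℝ) * p ^ k * (1 - p) ^ (n - 1 - k) * (a (k + 1) - a k)) p := by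
  have key : ∀ k ∈ Finset.range (n + 1),
      HasDerivAt (fun q : ℝ => (n.choose k : ℝ) * q ^ k * (1 - q) ^ (n - k) * a k)
        (((n.choose k : ℝ) * ((k : ℝ) * p ^ (k - 1)) * (1 - p) ^ (n - k)
          + (n.choose k : ℝ) * p ^ k * (((n - k : ℕ) : ℝ) * (1 - p) ^ (n - k - 1) * (0 - 1))) * a k) p := by
    intro k _
    have h1 : HasDerivAt (fun q : ℝ => (n.choose k : ℝ) * q ^ k)
        ((n.choose k : ℝ) * ((k : ℝ) * p ^ (k - 1))) p := (hasDerivAt_pow k p).const_mul _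
    have h3 : HasDerivAt (fun q : ℝ => 1 - q) (0 - 1) p :=
      (hasDerivAt_const p 1).sub (hasDerivAt_id p)
    have h2 : HasDerivAt (fun q : ℝ => (1 - q) ^ (n - k))
        ((((n - k : ℕ) : ℝ) * (1 - p) ^ (n - k - 1)) * (0 - 1)) p :=
      (hasDerivAt_pow (n - k) (1 - p)).comp p h3
    have := (h1.mul h2).mul_const (a k)
    exact this
  have hsum := HasDerivAt.fun_sum key
  refine hsum.congr_deriv (Eq.symm ?_)
  have hnat1 : ∀ k, n * (n - 1).choose k = n.choose (k + 1) * (k + 1) := by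
    intro k
    have h := Nat.add_one_mul_choose_eq (n - 1) k
    rw [Nat.sub_add_cancel hn] at h
    omega
  have hnat2 : ∀ k, k < n → n.choose k * (n - k) = n * (n - 1).choose k := by
    intro k hk
    rw [hnat1 k, Nat.choose_succ_right_eq]
  have hsplit : ∀ k, ((n.choose k : ℝ) * ((k : ℝ) * p ^ (k - 1)) * (1 - p) ^ (n - k)
          + (n.choose k : ℝ) * p ^ k * (((n - k : ℕ) : ℝ) * (1 - p) ^ (n - k - 1) * (0 - 1))) * a k
        = (n.choose k : ℝ) * (k : ℝ) * p ^ (k - 1) * (1 - p) ^ (n - k) * a k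
          - (n.choose k : ℝ) * ((n - k : ℕ) : ℝ) * p ^ k * (1 - p) ^ (n - k - 1) * a k := by
    intro k; ring
  rw [Finset.sum_congr rfl fun k _ => hsplit k, Finset.sum_sub_distrib]
  rw [Finset.sum_range_succ' (fun k => (n.choose k : ℝ) * (k : ℝ) * p ^ (k - 1) * (1 - p) ^ (n - k) * a k) n]
  rw [Finset.sum_range_succ (fun k => (n.choose k : ℝ) * ((n - k : ℕ) : ℝ) * p ^ k * (1 - p) ^ (n - k - 1) * a k) n]
  simp only [Nat.cast_zero, Nat.sub_self, Nat.cast_ofNat, mul_zero, zero_mul, add_zero,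
    Nat.choose_zero_right, Nat.cast_one]
  rw [Finset.mul_sum]
  rw [show (∑ k ∈ Finset.range n, (n : ℝ) * (((n - 1).choose k : ℝ) * p ^ k * (1 - p) ^ (n - 1 - k) * (a (k + 1) - a k)))
      = ∑ k ∈ Finset.range n, ((n : ℝ) * ((n - 1).choose k : ℝ) * p ^ k * (1 - p) ^ (n - 1 - k) * a (k + 1)
        - (n : ℝ) * ((n - 1).choose k : ℝ) * p ^ k * (1 - p) ^ (n - 1 - k) * a k)
      from Finset.sum_congr rfl fun k _ => by ring, Finset.sum_sub_distrib]
  congr 1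
  · refine Finset.sum_congr rfl fun k hk => ?_
    have e1 : ((n : ℝ) * ((n - 1).choose k : ℝ)) = (n.choose (k + 1) : ℝ) * ((k : ℝ) + 1) := by
      exact_mod_cast congrArg (Nat.cast : ℕ → ℝ) (hnat1 k)
    have e2 : n - (k + 1) = n - 1 - k := by omega
    have e3 : k + 1 - 1 = k := by omega
    rw [e2, e3]
    push_cast
    linear_combination (p ^ k * (1 - p) ^ (n - 1 - k) * a (k + 1)) * e1
  · refine Finset.sum_congr rfl fun k hk => ?_
    have hk' : k < n := Finset.mem_range.mp hk
    have e1 : ((n.choose k : ℝ) * ((n - k : ℕ) : ℝ)) = (n : ℝ) * ((n - 1).choose k : ℝ) := by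
      exact_mod_cast congrArg (Nat.cast : ℕ → ℝ) (hnat2 k hk')
    have e2 : n - k - 1 = n - 1 - k := by omega
    rw [e2]
    linear_combination (-(p ^ k * (1 - p) ^ (n - 1 - k) * a k)) * e1

/-- The derivative of `p ↦ β(n,η,μ,p)` is the stated sum, and it is strictly negative. -/
theorem betaFn_hasDerivAt_p_neg (n : ℕ) (hn : 1 ≤ n) (η μ : ℝ) (hμ : 0 < μ)
    (p : ℝ) (hp0 : 0 < p) (hp1 : p < 1) (d : ℝ)
    (hd : d = (n : ℝ) * ∑ k ∈ Finset.range n,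
      ((n - 1).choose k : ℝ) * p ^ k * (1 - p) ^ (n - 1 - k) *
        (stdPhi (Real.sqrt ((n : ℝ) / 2) * (η - ((k : ℝ) + 1) * μ / n)) -
          stdPhi (Real.sqrt ((n : ℝ) / 2) * (η - (k : ℝ) * μ / n)))) :
    HasDerivAt (fun q : ℝ => betaFn n η μ q) d p ∧ d < 0 := by
  have hn0 : (0 : ℝ) < n := by exact_mod_cast hn
  set a : ℕ → ℝ := fun k => stdPhi (Real.sqrt ((n : ℝ) / 2) * (η - (k : ℝ) * μ / n)) with ha
  have hde : d = (n : ℝ) * ∑ k ∈ Finset.range n,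
      ((n - 1).choose k : ℝ) * p ^ k * (1 - p) ^ (n - 1 - k) * (a (k + 1) - a k) := by
    rw [hd]
    refine congrArg _ (Finset.sum_congr rfl fun k hk => ?_)
    simp only [ha]
    push_cast
    ring_nf
  constructor
  · rw [hde]
    have h := binom_sum_hasDerivAt n hn a p
    exact h
  · rw [hd]
    apply mul_neg_of_pos_of_neg hn0
    apply Finset.sum_neg _ (by simp; omega)
    intro k hk
    have hk' : k < n := Finset.mem_range.mp hk
    have hc : (0 : ℝ) < ((n - 1).choose k : ℝ) := by
      exact_mod_cast Nat.choose_pos (by omega : k ≤ n - 1)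
    have hcoef : (0 : ℝ) < ((n - 1).choose k : ℝ) * p ^ k * (1 - p) ^ (n - 1 - k) :=
      mul_pos (mul_pos hc (pow_pos hp0 k)) (pow_pos (by linarith) _)
    apply mul_neg_of_pos_of_neg hcoef
    rw [sub_neg]
    apply stdPhi_strictMono
    have hs : 0 < Real.sqrt ((n : ℝ) / 2) := Real.sqrt_pos.2 (by positivity)
    apply mul_lt_mul_of_pos_left _ hs
    have hlt : (k : ℝ) * μ / n < ((k : ℝ) + 1) * μ / n :=
      div_lt_div_of_pos_right (by linarith) hn0
    linarith [hlt]
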